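/- Define η(r,s) = c (1-r^2)(1-r^2 s^2)^{2-n} [(1-s)(1-sr^2)]^{n/2 - 2} s^{n/2 - 1} for 0 ≤ r < 1, 0 ≤ s ≤ 1, where c > 0 is a constant. Then for every integer k ≥ 0 there is a constant C_k such that for all r ∈ [0,1), ∫_0^1 |(r ∂/∂r)^k η(r,s)| ds ≤ C_k (1-r)^{-k}. -/

import Mathlib

noncomputable section

open Real

/-- The radial operator r d/dr on functions of one variable. -/
def Rad (f : ℝ → ℝ) (r : ℝ) : ℝ := r * deriv f r

/-- The kernel η(r,s) = c(1-r²)(1-r²s²)^{2-n}[(1-s)(1-sr²)]^{n/2-2} s^{n/2-1}. -/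
def eta (n : ℕ) (c r s : ℝ) : ℝ :=
  c * (1 - r ^ 2) * (1 - r ^ 2 * s ^ 2) ^ (2 - (n : ℤ)) *
    ((1 - s) * (1 - s * r ^ 2)) ^ ((n : ℝ) / 2 - 2) * s ^ ((n : ℝ) / 2 - 1)

namespace Stmt8Aux

open MeasureTheory intervalIntegral

structure Elem where
  q : ℝ
  m : ℕ
  p : ℕ
  a : ℕ
  i : ℕ
  j : ℕ

/-- value of an elementary term -/
def Elem.fn (n : ℕ) (e : Elem) (r s : ℝ) : ℝ :=
  e.q * r ^ e.m * s ^ e.p * (1 - r ^ 2) ^ e.a *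
    (1 - r ^ 2 * s ^ 2) ^ ((2 : ℝ) - n - e.i) * (1 - s * r ^ 2) ^ ((n : ℝ) / 2 - 2 - e.j)

/-- effect of the operator r·d/dr on an elementary term -/
def radStep (n : ℕ) (e : Elem) : List Elem :=
  [⟨e.q * e.m, e.m, e.p, e.a, e.i, e.j⟩,
   ⟨e.q * (-2) * e.a, e.m + 2, e.p, e.a - 1, e.i, e.j⟩,
   ⟨e.q * (-2) * ((2 : ℝ) - n - e.i), e.m + 2, e.p + 2, e.a, e.i + 1, e.j⟩,
   ⟨e.q * (-2) * ((n : ℝ) / 2 - 2 - e.j), e.m + 2, e.p + 1, e.a, e.i, e.j + 1⟩]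

def evalL (n : ℕ) (L : List Elem) (r s : ℝ) : ℝ := (L.map fun e => e.fn n r s).sum

def Lk (n : ℕ) (c : ℝ) : ℕ → List Elem
  | 0 => [⟨c, 0, 0, 1, 0, 0⟩]
  | (k + 1) => (Lk n c k).flatMap (radStep n)

/-- the s-dependent scalar factor -/
def Ssc (n : ℕ) (s : ℝ) : ℝ := (1 - s) ^ ((n : ℝ) / 2 - 2) * s ^ ((n : ℝ) / 2 - 1)

lemma evalL_nil (n : ℕ) (r s : ℝ) : evalL n [] r s = 0 := rfl

lemma evalL_cons (n : ℕ) (e : Elem) (L : List Elem) (r s : ℝ) :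
    evalL n (e :: L) r s = e.fn n r s + evalL n L r s := by
  simp [evalL]

lemma evalL_append (n : ℕ) (L₁ L₂ : List Elem) (r s : ℝ) :
    evalL n (L₁ ++ L₂) r s = evalL n L₁ r s + evalL n L₂ r s := by
  simp [evalL]

/-- positivity facts -/
lemma bases_pos {r s : ℝ} (hr : r ∈ Set.Ioo (-1 : ℝ) 1) (hs : s ∈ Set.Ioo (0 : ℝ) 1) :
    0 < 1 - r ^ 2 ∧ 0 < 1 - r ^ 2 * s ^ 2 ∧ 0 < 1 - s * r ^ 2 := by
  obtain ⟨hr1, hr2⟩ := hr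
  obtain ⟨hs1, hs2⟩ := hs
  have h1 : r ^ 2 < 1 := by nlinarith
  have h2 : s ^ 2 < 1 := by nlinarith
  refine ⟨by nlinarith, by nlinarith, by nlinarith⟩

/-- derivative of one elementary term, with the key algebraic identity -/
lemma elem_hasDeriv (n : ℕ) (e : Elem) {r s : ℝ} (hr : r ∈ Set.Ioo (-1 : ℝ) 1)
    (hs : s ∈ Set.Ioo (0 : ℝ) 1) :
    ∃ D : ℝ, HasDerivAt (fun ρ => e.fn n ρ s) D r ∧
      r * D = evalL n (radStep n e) r s := by
  obtain ⟨hX, hA, hB⟩ := bases_pos hr hs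
  obtain ⟨q, m, p, a, i, j⟩ := e
  have h2 : HasDerivAt (fun ρ : ℝ => ρ ^ 2) (2 * r) r := by
    simpa using hasDerivAt_pow 2 r
  have hA' : HasDerivAt (fun ρ : ℝ => 1 - ρ ^ 2 * s ^ 2) (-(2 * r * s ^ 2)) r := by
    have h := (h2.mul_const (s ^ 2)).const_sub 1
    convert h using 1 <;> ring
  have hB' : HasDerivAt (fun ρ : ℝ => 1 - s * ρ ^ 2) (-(s * (2 * r))) r := by
    have h := (h2.const_mul s).const_sub 1
    convert h using 1 <;> ring
  have hX' : HasDerivAt (fun ρ : ℝ => (1 - ρ ^ 2) ^ a)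
      ((a : ℝ) * (1 - r ^ 2) ^ (a - 1) * (-(2 * r))) r := (h2.const_sub 1).pow a
  have hArp : HasDerivAt (fun ρ : ℝ => (1 - ρ ^ 2 * s ^ 2) ^ ((2:ℝ) - n - i))
      ((-(2 * r * s ^ 2)) * ((2:ℝ) - n - i) * (1 - r ^ 2 * s ^ 2) ^ ((2:ℝ) - n - i - 1)) r :=
    hA'.rpow_const (Or.inl hA.ne')
  have hBrp : HasDerivAt (fun ρ : ℝ => (1 - s * ρ ^ 2) ^ ((n:ℝ)/2 - 2 - j))
      ((-(s * (2 * r))) * ((n:ℝ)/2 - 2 - j) * (1 - s * r ^ 2) ^ ((n:ℝ)/2 - 2 - j - 1)) r :=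
    hB'.rpow_const (Or.inl hB.ne')
  have h0 : HasDerivAt (fun ρ : ℝ => q * ρ ^ m * s ^ p)
      (q * ((m : ℝ) * r ^ (m - 1)) * s ^ p) r :=
    ((hasDerivAt_pow m r).const_mul q).mul_const (s ^ p)
  have hfull := ((h0.mul hX').mul hArp).mul hBrp
  refine ⟨_, hfull, ?_⟩
  simp only [evalL, radStep, Elem.fn, List.map, List.sum_cons, List.sum_nil]
  have e1 : (2:ℝ) - (n:ℝ) - (↑(i+1):ℝ) = ((2:ℝ) - n - i) - 1 := by push_cast; ring
  have e2 : (n:ℝ)/2 - 2 - (↑(j+1):ℝ) = ((n:ℝ)/2 - 2 - j) - 1 := by push_cast; ring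
  rw [e1, e2]
  cases m with
  | zero => push_cast; simp; ring
  | succ m => simp only [Nat.add_sub_cancel, Pi.mul_apply]; push_cast; ring

/-- derivative of a list sum -/
lemma list_hasDeriv (n : ℕ) (L : List Elem) {r s : ℝ} (hr : r ∈ Set.Ioo (-1 : ℝ) 1)
    (hs : s ∈ Set.Ioo (0 : ℝ) 1) :
    ∃ D : ℝ, HasDerivAt (fun ρ => evalL n L ρ s) D r ∧
      r * D = evalL n (L.flatMap (radStep n)) r s := by
  induction L with
  | nil => exact ⟨0, by simpa [evalL] using hasDerivAt_const r (0:ℝ), by simp [evalL]⟩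
  | cons e L ih =>
    obtain ⟨D1, hD1, hD1'⟩ := elem_hasDeriv n e hr hs
    obtain ⟨D2, hD2, hD2'⟩ := ih
    refine ⟨D1 + D2, ?_, ?_⟩
    · have := hD1.add hD2
      simp only [evalL_cons]; exact this
    · rw [show (e :: L).flatMap (radStep n) = radStep n e ++ L.flatMap (radStep n) from rfl, evalL_append, mul_add, hD1', hD2']

/-- the base case: eta as scalar times elementary term -/
lemma eta_eq (n : ℕ) (c : ℝ) {r s : ℝ} (hr : r ∈ Set.Ioo (-1 : ℝ) 1)
    (hs : s ∈ Set.Ioo (0 : ℝ) 1) :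
    eta n c r s = Ssc n s * evalL n (Lk n c 0) r s := by
  obtain ⟨hX, hA, hB⟩ := bases_pos hr hs
  have hs1 : (0:ℝ) ≤ 1 - s := by linarith [hs.2]
  rw [eta, Ssc]
  simp only [Lk, evalL, List.map, List.sum_cons, List.sum_nil, Elem.fn]
  rw [Real.mul_rpow hs1 hB.le]
  rw [show (1 - r ^ 2 * s ^ 2) ^ (2 - (n:ℤ)) =
      (1 - r ^ 2 * s ^ 2) ^ (((2 - (n:ℤ) : ℤ)) : ℝ) from (Real.rpow_intCast _ _).symm]
  rw [show (((2 - (n:ℤ) : ℤ)) : ℝ) = (2:ℝ) - (n:ℕ) - ((0:ℕ):ℝ) by push_cast; ring]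
  rw [show (n:ℝ)/2 - 2 = (n:ℝ)/2 - 2 - ((0:ℕ):ℝ) by push_cast; ring]
  ring

/-- the structural identity for iterates of Rad -/
lemma rad_iter (n : ℕ) (c : ℝ) (k : ℕ) {s : ℝ} (hs : s ∈ Set.Ioo (0 : ℝ) 1) :
    ∀ r ∈ Set.Ioo (-1 : ℝ) 1,
      Rad^[k] (fun ρ => eta n c ρ s) r = Ssc n s * evalL n (Lk n c k) r s := by
  induction k with
  | zero => intro r hr; simpa using eta_eq n c hr hs
  | succ k ih =>
    intro r hr
    rw [Function.iterate_succ_apply']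
    obtain ⟨D, hD, hD'⟩ := list_hasDeriv n (Lk n c k) hr hs
    have hev : Rad^[k] (fun ρ => eta n c ρ s)
        =ᶠ[nhds r] fun ρ => Ssc n s * evalL n (Lk n c k) ρ s := by
      filter_upwards [Ioo_mem_nhds hr.1 hr.2] with ρ hρ using ih ρ hρ
    show r * deriv (Rad^[k] fun ρ => eta n c ρ s) r = _
    rw [hev.deriv_eq, deriv_const_mul_field, hD.deriv,
      show Lk n c (k+1) = (Lk n c k).flatMap (radStep n) from rfl, ← hD']
    ring

/-- invariant of the lists -/
def inv (k : ℕ) (e : Elem) : Prop := e.a ≤ 1 ∧ 1 - e.a + e.i + e.j ≤ k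

lemma Lk_inv (n : ℕ) (c : ℝ) (k : ℕ) : ∀ e ∈ Lk n c k, inv k e := by
  induction k with
  | zero => intro e he; simp [Lk] at he; subst he; simp [inv]
  | succ k ih =>
    intro e' he'
    simp only [Lk, List.mem_flatMap] at he'
    obtain ⟨e, he, hstep⟩ := he'
    obtain ⟨ha, hw⟩ := ih e he
    simp only [radStep, List.mem_cons, List.mem_singleton] at hstep
    rcases hstep with h | h | h | (h | h) <;>
      [skip; skip; skip; skip; exact absurd h List.not_mem_nil] <;>
      subst h <;> constructor <;> dsimp only [inv] <;> omega

set_option maxHeartbeats 1000000 in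
/-- pointwise bound on elementary terms -/
lemma elem_bound (n : ℕ) (hn : 3 ≤ n) (k : ℕ) (e : Elem) (he : inv k e)
    {r s : ℝ} (hr0 : 0 ≤ r) (hr1 : r < 1) (hs : s ∈ Set.Ioo (0 : ℝ) 1) :
    |e.fn n r s| ≤ |e.q| * 2 ^ (2 * n + k + 1) * (1 - r) ^ ((1 : ℝ) - k) *
      ((1 - r ^ 2) + (1 - s)) ^ (-(n : ℝ) / 2) := by
  have hr' : r ∈ Set.Ioo (-1 : ℝ) 1 := ⟨by linarith, hr1⟩
  obtain ⟨hX, hA, hB⟩ := bases_pos hr' hs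
  obtain ⟨hs0, hs1⟩ := hs
  obtain ⟨q, m, p, a, i, j⟩ := e
  obtain ⟨ha, hw⟩ := he
  dsimp only at ha hw
  have hs2 : s ^ 2 ≤ s := by nlinarith
  have hr2 : r ^ 2 ≤ 1 := by nlinarith
  have hrr : r ^ 2 ≤ r := by nlinarith
  have hA1 : r ^ 2 * s ^ 2 ≤ r ^ 2 := by nlinarith
  have hA2 : r ^ 2 * s ^ 2 ≤ s := by nlinarith
  have hB1 : s * r ^ 2 ≤ r ^ 2 := by nlinarith
  have hB2 : s * r ^ 2 ≤ s := by nlinarith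
  set v : ℝ := (1 - r ^ 2) + (1 - s) with hv_def
  have hn3 : (3:ℝ) ≤ (n:ℝ) := by exact_mod_cast hn
  have hv : 0 < v := by rw [hv_def]; linarith
  have h1r : 0 < 1 - r := by linarith
  have h1rv : 1 - r ≤ v := by rw [hv_def]; linarith
  have hvA : v / 2 ≤ 1 - r ^ 2 * s ^ 2 := by rw [hv_def]; linarith
  have hvB1 : v / 2 ≤ 1 - s * r ^ 2 := by rw [hv_def]; linarith
  have hvB2 : 1 - s * r ^ 2 ≤ v := by
    rw [hv_def]; nlinarith [mul_nonneg hX.le (by linarith : (0:ℝ) ≤ 1 - s)]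
  set α : ℝ := (2 : ℝ) - n - i with hα_def
  set β : ℝ := (n : ℝ) / 2 - 2 - j with hβ_def
  have hα : α ≤ 0 := by
    simp only [hα_def]
    have : (0:ℝ) ≤ (i:ℝ) := Nat.cast_nonneg i
    linarith
  -- bound on the A factor
  have bA : (1 - r ^ 2 * s ^ 2) ^ α ≤ v ^ α * (2:ℝ) ^ ((n:ℝ) - 2 + i) := by
    have h1 : (1 - r ^ 2 * s ^ 2) ^ α ≤ (v / 2) ^ α :=
      Real.rpow_le_rpow_of_nonpos (by positivity) hvA hα
    have h2 : (v / 2) ^ α = v ^ α * (2:ℝ) ^ (-α) := by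
      rw [Real.div_rpow hv.le (by norm_num : (0:ℝ) ≤ 2), Real.rpow_neg (by norm_num : (0:ℝ) ≤ 2),
        div_eq_mul_inv]
    have h3 : (2:ℝ) ^ (-α) = (2:ℝ) ^ ((n:ℝ) - 2 + i) := by
      congr 1; simp only [hα_def]; ring
    rw [h2, h3] at h1; exact h1
  -- bound on the B factor
  have bB : (1 - s * r ^ 2) ^ β ≤ v ^ β * (2:ℝ) ^ ((j:ℝ) + n) := by
    rcases le_or_gt 0 β with hβ | hβ
    · have h1 : (1 - s * r ^ 2) ^ β ≤ v ^ β := Real.rpow_le_rpow hB.le hvB2 hβ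
      have h2 : (1:ℝ) ≤ (2:ℝ) ^ ((j:ℝ) + n) :=
        Real.one_le_rpow one_le_two (by positivity)
      nlinarith [Real.rpow_nonneg hv.le β]
    · have h1 : (1 - s * r ^ 2) ^ β ≤ (v / 2) ^ β :=
        Real.rpow_le_rpow_of_nonpos (by positivity) hvB1 hβ.le
      have h2 : (v / 2) ^ β = v ^ β * (2:ℝ) ^ (-β) := by
        rw [Real.div_rpow hv.le (by norm_num : (0:ℝ) ≤ 2), Real.rpow_neg (by norm_num : (0:ℝ) ≤ 2),
          div_eq_mul_inv]
      have h3 : (2:ℝ) ^ (-β) ≤ (2:ℝ) ^ ((j:ℝ) + n) := by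
        apply Real.rpow_le_rpow_of_exponent_le one_le_two
        have : (0:ℝ) ≤ (j:ℝ) := Nat.cast_nonneg j
        simp only [hβ_def]; linarith
      calc (1 - s * r ^ 2) ^ β ≤ v ^ β * (2:ℝ) ^ (-β) := h2 ▸ h1
        _ ≤ v ^ β * (2:ℝ) ^ ((j:ℝ) + n) :=
            mul_le_mul_of_nonneg_left h3 (Real.rpow_nonneg hv.le β)
  -- the main power comparison
  have bMain : (1 - r ^ 2) ^ a * (v ^ α * v ^ β) ≤
      2 * ((1 - r) ^ ((1:ℝ) - k) * v ^ (-(n:ℝ) / 2)) := by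
    have hvv : v ^ α * v ^ β = v ^ (-(n:ℝ)/2) * v ^ (-((i:ℝ) + j)) := by
      rw [← Real.rpow_add hv, ← Real.rpow_add hv]
      congr 1; simp only [hα_def, hβ_def]; ring
    have hvr : v ^ (-((i:ℝ) + j)) ≤ (1 - r) ^ (-((i:ℝ) + j)) :=
      Real.rpow_le_rpow_of_nonpos h1r h1rv (neg_nonpos.mpr (by positivity))
    have hvpos : (0:ℝ) ≤ v ^ (-(n:ℝ)/2) := Real.rpow_nonneg hv.le _
    interval_cases a
    · -- a = 0
      have hk : (i:ℝ) + j + 1 ≤ (k:ℝ) := by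
        have : i + j + 1 ≤ k := by omega
        exact_mod_cast this
      have h4 : (1 - r) ^ (-((i:ℝ) + j)) ≤ (1 - r) ^ ((1:ℝ) - k) :=
        Real.rpow_le_rpow_of_exponent_ge h1r (by linarith) (by linarith)
      calc (1 - r ^ 2) ^ (0:ℕ) * (v ^ α * v ^ β) = v ^ (-(n:ℝ)/2) * v ^ (-((i:ℝ) + j)) := by
            rw [hvv]; ring
        _ ≤ v ^ (-(n:ℝ)/2) * (1 - r) ^ ((1:ℝ) - k) :=
            mul_le_mul_of_nonneg_left (le_trans hvr h4) hvpos
        _ ≤ 2 * ((1 - r) ^ ((1:ℝ) - k) * v ^ (-(n:ℝ) / 2)) := by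
            nlinarith [Real.rpow_nonneg h1r.le ((1:ℝ) - k), hvpos]
    · -- a = 1
      have hk : (i:ℝ) + j ≤ (k:ℝ) := by
        have : i + j ≤ k := by omega
        exact_mod_cast this
      have h4 : (1 - r) ^ ((1:ℝ) + -((i:ℝ) + j)) ≤ (1 - r) ^ ((1:ℝ) - k) :=
        Real.rpow_le_rpow_of_exponent_ge h1r (by linarith) (by linarith)
      have h5 : (1 - r ^ 2) ≤ 2 * (1 - r) := by nlinarith
      have h6 : (1 - r) * (1 - r) ^ (-((i:ℝ) + j)) = (1 - r) ^ ((1:ℝ) + -((i:ℝ) + j)) := by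
        rw [Real.rpow_add h1r, Real.rpow_one]
      calc (1 - r ^ 2) ^ (1:ℕ) * (v ^ α * v ^ β)
          = (1 - r ^ 2) * (v ^ (-(n:ℝ)/2) * v ^ (-((i:ℝ) + j))) := by rw [hvv]; ring
        _ ≤ (2 * (1 - r)) * (v ^ (-(n:ℝ)/2) * (1 - r) ^ (-((i:ℝ) + j))) := by
            apply mul_le_mul h5 (mul_le_mul_of_nonneg_left hvr hvpos) ?_ (by linarith)
            positivity
        _ = 2 * (((1 - r) * (1 - r) ^ (-((i:ℝ) + j))) * v ^ (-(n:ℝ)/2)) := by ring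
        _ ≤ 2 * ((1 - r) ^ ((1:ℝ) - k) * v ^ (-(n:ℝ) / 2)) := by
            rw [h6]
            exact mul_le_mul_of_nonneg_left
              (mul_le_mul_of_nonneg_right h4 hvpos) (by norm_num)
  -- assemble
  have habs : |Elem.fn n ⟨q,m,p,a,i,j⟩ r s| =
      |q| * (r ^ m * s ^ p * ((1 - r ^ 2) ^ a *
        ((1 - r ^ 2 * s ^ 2) ^ α * (1 - s * r ^ 2) ^ β))) := by
    have e1 : Elem.fn n ⟨q,m,p,a,i,j⟩ r s =
        q * (r ^ m * s ^ p * ((1 - r ^ 2) ^ a *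
          ((1 - r ^ 2 * s ^ 2) ^ α * (1 - s * r ^ 2) ^ β))) := by
      rw [Elem.fn]; ring
    rw [e1, abs_mul]
    congr 1
    exact abs_of_nonneg (by positivity)
  rw [habs]
  have step1 : r ^ m * s ^ p * ((1 - r ^ 2) ^ a *
      ((1 - r ^ 2 * s ^ 2) ^ α * (1 - s * r ^ 2) ^ β)) ≤
      1 * 1 * ((1 - r ^ 2) ^ a *
      ((v ^ α * (2:ℝ) ^ ((n:ℝ) - 2 + i)) * (v ^ β * (2:ℝ) ^ ((j:ℝ) + n)))) := by
    gcongr <;>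
      first
        | exact pow_le_one₀ hr0 hr1.le
        | exact pow_le_one₀ hs0.le hs1.le
        | positivity
  have step2 : (1:ℝ) * 1 * ((1 - r ^ 2) ^ a *
      ((v ^ α * (2:ℝ) ^ ((n:ℝ) - 2 + i)) * (v ^ β * (2:ℝ) ^ ((j:ℝ) + n)))) =
      ((2:ℝ) ^ ((n:ℝ) - 2 + i) * (2:ℝ) ^ ((j:ℝ) + n)) *
        ((1 - r ^ 2) ^ a * (v ^ α * v ^ β)) := by ring
  have hconst : (2:ℝ) ^ ((n:ℝ) - 2 + i) * (2:ℝ) ^ ((j:ℝ) + n) * 2 ≤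
      (2:ℝ) ^ (2 * n + k + 1) := by
    have h1 : (2:ℝ) ^ ((n:ℝ) - 2 + i) * (2:ℝ) ^ ((j:ℝ) + n) * 2 =
        (2:ℝ) ^ (((n:ℝ) - 2 + i) + ((j:ℝ) + n) + 1) := by
      simp only [Real.rpow_add (show (0:ℝ) < 2 by norm_num), Real.rpow_one]
    have h2 : ((n:ℝ) - 2 + i) + ((j:ℝ) + n) + 1 ≤ ((2 * n + k + 1 : ℕ) : ℝ) := by
      have hik : i + j ≤ k := by omega
      have : (i:ℝ) + j ≤ (k:ℝ) := by exact_mod_cast hik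
      push_cast
      linarith
    have h3 : (2:ℝ) ^ (((n:ℝ) - 2 + i) + ((j:ℝ) + n) + 1) ≤ (2:ℝ) ^ (((2 * n + k + 1 : ℕ) : ℝ)) :=
      Real.rpow_le_rpow_of_exponent_le one_le_two h2
    rw [h1]
    calc (2:ℝ) ^ (((n:ℝ) - 2 + i) + ((j:ℝ) + n) + 1) ≤ (2:ℝ) ^ (((2 * n + k + 1 : ℕ) : ℝ)) := h3
      _ = (2:ℝ) ^ (2 * n + k + 1) := Real.rpow_natCast 2 _
  calc |q| * (r ^ m * s ^ p * ((1 - r ^ 2) ^ a *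
        ((1 - r ^ 2 * s ^ 2) ^ α * (1 - s * r ^ 2) ^ β)))
      ≤ |q| * (1 * 1 * ((1 - r ^ 2) ^ a *
        ((v ^ α * (2:ℝ) ^ ((n:ℝ) - 2 + i)) * (v ^ β * (2:ℝ) ^ ((j:ℝ) + n))))) :=
        mul_le_mul_of_nonneg_left step1 (abs_nonneg q)
    _ = |q| * (((2:ℝ) ^ ((n:ℝ) - 2 + i) * (2:ℝ) ^ ((j:ℝ) + n)) *
        ((1 - r ^ 2) ^ a * (v ^ α * v ^ β))) := by rw [step2]
    _ ≤ |q| * (((2:ℝ) ^ ((n:ℝ) - 2 + i) * (2:ℝ) ^ ((j:ℝ) + n)) *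
        (2 * ((1 - r) ^ ((1:ℝ) - k) * v ^ (-(n:ℝ) / 2)))) := by
        apply mul_le_mul_of_nonneg_left _ (abs_nonneg q)
        apply mul_le_mul_of_nonneg_left bMain (by positivity)
    _ = (|q| * ((2:ℝ) ^ ((n:ℝ) - 2 + i) * (2:ℝ) ^ ((j:ℝ) + n) * 2)) *
        ((1 - r) ^ ((1:ℝ) - k) * v ^ (-(n:ℝ) / 2)) := by ring
    _ ≤ (|q| * (2:ℝ) ^ (2 * n + k + 1)) * ((1 - r) ^ ((1:ℝ) - k) * v ^ (-(n:ℝ) / 2)) := by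
        apply mul_le_mul_of_nonneg_right _ (by positivity)
        exact mul_le_mul_of_nonneg_left hconst (abs_nonneg q)
    _ = |q| * 2 ^ (2 * n + k + 1) * (1 - r) ^ ((1:ℝ) - k) * v ^ (-(n:ℝ) / 2) := by ring

/-- integrability of the dominating function -/
lemma master_integrable (n : ℕ) (hn : 3 ≤ n) {δ : ℝ} (hδ : 0 < δ) :
    MeasureTheory.IntegrableOn
      (fun s : ℝ => (1 - s) ^ ((n : ℝ) / 2 - 2) * (δ + (1 - s)) ^ (-(n : ℝ) / 2))
      (Set.Ioo (0:ℝ) 1) := by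
  have hn3 : (3:ℝ) ≤ (n:ℝ) := by exact_mod_cast hn
  have I1 : IntervalIntegrable (fun s : ℝ => (1 - s) ^ ((n : ℝ) / 2 - 2)) volume 0 1 := by
    have h0 : IntervalIntegrable (fun x : ℝ => x ^ ((n : ℝ) / 2 - 2)) volume 0 1 :=
      intervalIntegral.intervalIntegrable_rpow' (by linarith)
    have h1 := h0.comp_sub_left 1
    simpa using h1.symm
  have hdenpos : ∀ x ∈ Set.uIcc (0:ℝ) 1, 0 < δ + (1 - x) := by
    intro x hx
    rw [Set.uIcc_of_le (by norm_num : (0:ℝ) ≤ 1)] at hx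
    have : x ≤ 1 := hx.2
    linarith
  have cont : ContinuousOn (fun s : ℝ => (δ + (1 - s)) ^ (-(n : ℝ) / 2))
      (Set.uIcc (0:ℝ) 1) := by
    apply ContinuousOn.rpow_const
    · fun_prop
    · intro x hx; exact Or.inl (hdenpos x hx).ne'
  have Ig := I1.mul_continuousOn cont
  rw [intervalIntegrable_iff_integrableOn_Ioc_of_le (by norm_num : (0:ℝ) ≤ 1)] at Ig
  exact Ig.mono_set Set.Ioo_subset_Ioc_self

/-- bound on a whole list -/
lemma evalL_bound (n : ℕ) (hn : 3 ≤ n) (k : ℕ) (L : List Elem) (hL : ∀ e ∈ L, inv k e)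
    {r s : ℝ} (hr0 : 0 ≤ r) (hr1 : r < 1) (hs : s ∈ Set.Ioo (0 : ℝ) 1) :
    |evalL n L r s| ≤ (L.map fun e => |e.q|).sum *
      ((2:ℝ) ^ (2 * n + k + 1) * ((1 - r) ^ ((1:ℝ) - k) *
        ((1 - r ^ 2) + (1 - s)) ^ (-(n : ℝ) / 2))) := by
  induction L with
  | nil => simp [evalL]
  | cons e L ih =>
    have h1 := elem_bound n hn k e (hL e (List.mem_cons_self)) hr0 hr1 hs
    have h2 := ih fun e' he' => hL e' (List.mem_cons_of_mem _ he')
    rw [evalL_cons]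
    calc |e.fn n r s + evalL n L r s| ≤ |e.fn n r s| + |evalL n L r s| := abs_add_le _ _
      _ ≤ (|e.q| * 2 ^ (2 * n + k + 1) * (1 - r) ^ ((1:ℝ) - k) *
            ((1 - r ^ 2) + (1 - s)) ^ (-(n : ℝ) / 2)) +
          (L.map fun e => |e.q|).sum * ((2:ℝ) ^ (2 * n + k + 1) * ((1 - r) ^ ((1:ℝ) - k) *
            ((1 - r ^ 2) + (1 - s)) ^ (-(n : ℝ) / 2))) := add_le_add h1 h2
      _ = ((e :: L).map fun e => |e.q|).sum *
          ((2:ℝ) ^ (2 * n + k + 1) * ((1 - r) ^ ((1:ℝ) - k) *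
            ((1 - r ^ 2) + (1 - s)) ^ (-(n : ℝ) / 2))) := by
          simp only [List.map_cons, List.sum_cons]
          ring

lemma Qsum_nonneg (L : List Elem) : 0 ≤ (L.map fun e => |e.q|).sum := by
  apply List.sum_nonneg
  intro x hx
  obtain ⟨e, _, rfl⟩ := List.mem_map.mp hx
  exact abs_nonneg _

set_option maxHeartbeats 1600000 in
/-- the master integral estimate -/
lemma master_integral (n : ℕ) (hn : 3 ≤ n) {δ : ℝ} (hδ : 0 < δ) :
    (∫ s in Set.Ioo (0 : ℝ) 1,
      (1 - s) ^ ((n : ℝ) / 2 - 2) * (δ + (1 - s)) ^ (-(n : ℝ) / 2)) ≤ 2 / δ := by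
  have hn3 : (3:ℝ) ≤ (n:ℝ) := by exact_mod_cast hn
  set κ : ℝ := (n:ℝ)/2 - 1 with hκ_def
  have hκ : (1:ℝ)/2 ≤ κ := by rw [hκ_def]; linarith
  have hκ0 : 0 < κ := lt_of_lt_of_le (by norm_num) hκ
  set g : ℝ → ℝ := fun s => (1 - s) ^ ((n : ℝ) / 2 - 2) * (δ + (1 - s)) ^ (-(n : ℝ) / 2)
    with hg_def
  set F : ℝ → ℝ := fun s => -(1/(κ*δ)) * ((1 - s)/(δ + (1 - s))) ^ κ with hF_def
  -- integrability of g
  have I1 : IntervalIntegrable (fun s : ℝ => (1 - s) ^ ((n : ℝ) / 2 - 2)) volume 0 1 := by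
    have h0 : IntervalIntegrable (fun x : ℝ => x ^ ((n : ℝ) / 2 - 2)) volume 0 1 :=
      intervalIntegral.intervalIntegrable_rpow' (by linarith)
    have h1 := h0.comp_sub_left 1
    simpa using h1.symm
  have hdenpos : ∀ x ∈ Set.uIcc (0:ℝ) 1, 0 < δ + (1 - x) := by
    intro x hx
    rw [Set.uIcc_of_le (by norm_num : (0:ℝ) ≤ 1)] at hx
    have : x ≤ 1 := hx.2
    linarith
  have cont : ContinuousOn (fun s : ℝ => (δ + (1 - s)) ^ (-(n : ℝ) / 2)) (Set.uIcc (0:ℝ) 1) := by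
    apply ContinuousOn.rpow_const
    · fun_prop
    · intro x hx; exact Or.inl (hdenpos x hx).ne'
  have Ig : IntervalIntegrable g volume 0 1 := by
    rw [hg_def]; exact I1.mul_continuousOn cont
  -- derivative of F on the open interval
  have hderiv : ∀ x ∈ Set.Ioo (0:ℝ) 1, HasDerivAt F (g x) x := by
    intro x hx
    have h1x : 0 < 1 - x := by linarith [hx.2]
    have hd : 0 < δ + (1 - x) := by linarith
    have hw : HasDerivAt (fun s : ℝ => (1 - s)/(δ + (1 - s)))
        (((-1) * (δ + (1 - x)) - (1 - x) * (-1)) / (δ + (1 - x)) ^ 2) x := by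
      exact (((hasDerivAt_id x).const_sub 1)).div
        (((hasDerivAt_id x).const_sub 1).const_add δ) hd.ne'
    have hwpos : 0 < (1 - x)/(δ + (1 - x)) := by positivity
    have hwk := hw.rpow_const (p := κ) (Or.inl hwpos.ne')
    have hF := hwk.const_mul (-(1/(κ*δ)))
    refine hF.congr_deriv ?_; symm
    have e1 : ((1 - x)/(δ + (1 - x))) ^ (κ - 1) =
        (1 - x) ^ (κ - 1) * ((δ + (1 - x)) ^ (κ - 1))⁻¹ := by
      rw [Real.div_rpow h1x.le hd.le, div_eq_mul_inv]
    have e2 : (δ + (1 - x)) ^ (κ - 1) * (δ + (1 - x)) ^ (2:ℕ) =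
        (δ + (1 - x)) ^ ((n:ℝ)/2) := by
      rw [show ((δ + (1 - x)):ℝ) ^ (2:ℕ) = (δ + (1 - x)) ^ ((2:ℝ)) by
          rw [← Real.rpow_natCast (δ + (1 - x)) 2]; norm_num,
        ← Real.rpow_add hd]
      congr 1
      rw [hκ_def]; ring
    have e3 : (δ + (1 - x)) ^ (-((n:ℝ)/2)) = ((δ + (1 - x)) ^ ((n:ℝ)/2))⁻¹ :=
      Real.rpow_neg hd.le _
    have hgx : g x = (1 - x) ^ (κ - 1) * ((δ + (1 - x)) ^ ((n:ℝ)/2))⁻¹ := by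
      simp only [hg_def]
      have : ((n:ℝ)/2 - 2) = κ - 1 := by rw [hκ_def]; ring
      rw [this, show (-(n:ℝ)/2) = -((n:ℝ)/2) by ring, e3]
    rw [hgx, e1]
    have hkd : κ * δ ≠ 0 := by positivity
    have hd1 : ((δ + (1 - x)) ^ (κ - 1)) ≠ 0 := by
      positivity
    have hd2 : ((δ + (1 - x)) ^ ((n:ℝ)/2)) ≠ 0 := by positivity
    rw [← e2]
    field_simp
    ring
  -- continuity of F on the closed interval
  have hcontF : ContinuousOn F (Set.Icc (0:ℝ) 1) := by
    rw [hF_def]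
    apply ContinuousOn.mul continuousOn_const
    apply ContinuousOn.rpow_const
    · apply ContinuousOn.div (by fun_prop) (by fun_prop)
      intro x hx
      have := hdenpos x (by rwa [Set.uIcc_of_le (by norm_num : (0:ℝ) ≤ 1)])
      exact this.ne'
    · intro x hx; exact Or.inr hκ0.le
  -- FTC
  have hFTC : ∫ s in (0:ℝ)..1, g s = F 1 - F 0 :=
    intervalIntegral.integral_eq_sub_of_hasDeriv_right_of_le (by norm_num) hcontF
      (fun x hx => (hderiv x hx).hasDerivWithinAt) Ig
  have hF1 : F 1 = 0 := by
    simp only [hF_def]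
    rw [show ((1:ℝ) - 1)/(δ + ((1:ℝ) - 1)) = 0 by norm_num, Real.zero_rpow hκ0.ne']
    ring
  have hF0 : F 0 = -(1/(κ*δ)) * (1/(δ + 1)) ^ κ := by
    simp only [hF_def]; norm_num
  have hval : ∫ s in (0:ℝ)..1, g s ≤ 2 / δ := by
    rw [hFTC, hF1, hF0]
    have h1 : ((1:ℝ)/(δ + 1)) ^ κ ≤ 1 :=
      Real.rpow_le_one (by positivity) (by rw [div_le_one (by linarith)]; linarith) hκ0.le
    have h2 : (0:ℝ) < κ * δ := by positivity
    have h3 : 0 - -(1/(κ*δ)) * (1/(δ + 1)) ^ κ = (1/(δ + 1)) ^ κ / (κ*δ) := by ring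
    rw [h3]
    have h4 : (1/(δ + 1)) ^ κ / (κ*δ) ≤ 1 / (κ*δ) := by gcongr
    have h5 : 1/(κ*δ) ≤ 2/δ := by
      rw [div_le_div_iff₀ h2 hδ]
      clear_value κ
      nlinarith
    linarith
  have : ∫ s in Set.Ioo (0:ℝ) 1, g s = ∫ s in (0:ℝ)..1, g s := by
    rw [intervalIntegral.integral_of_le (by norm_num : (0:ℝ) ≤ 1),
      MeasureTheory.integral_Ioc_eq_integral_Ioo]
  rw [hg_def] at this
  rw [this]
  exact hval

end Stmt8Aux

/-- For every k there is C_k with ∫₀¹ |(r ∂/∂r)^k η(r,s)| ds ≤ C_k (1-r)^{-k}. -/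
theorem stmt8 (n : ℕ) (hn : 3 ≤ n) (c : ℝ) (hc : 0 < c) (k : ℕ) :
    ∃ C : ℝ, ∀ r : ℝ, 0 ≤ r → r < 1 →
      (∫ s in Set.Ioo (0 : ℝ) 1, |Rad^[k] (fun ρ => eta n c ρ s) r|) ≤
        C / (1 - r) ^ k := by
  classical
  have hn3 : (3:ℝ) ≤ (n:ℝ) := by exact_mod_cast hn
  set L := Stmt8Aux.Lk n c k with hL
  set Q : ℝ := (L.map fun e => |e.q|).sum with hQ
  set K : ℝ := (2:ℝ) ^ (2 * n + k + 1) with hK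
  have hQ0 : 0 ≤ Q := Stmt8Aux.Qsum_nonneg L
  have hK0 : 0 < K := by rw [hK]; positivity
  refine ⟨2 * (Q * K), ?_⟩
  intro r hr0 hr1
  have h1r : 0 < 1 - r := by linarith
  have hδ : 0 < 1 - r ^ 2 := by nlinarith
  have hδr : 1 - r ≤ 1 - r ^ 2 := by nlinarith
  set C0 : ℝ := Q * K * (1 - r) ^ ((1:ℝ) - k) with hC0
  have hC00 : 0 ≤ C0 := by
    rw [hC0]
    have := Real.rpow_nonneg h1r.le ((1:ℝ) - k)
    positivity
  -- pointwise bound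
  have key : ∀ s ∈ Set.Ioo (0:ℝ) 1,
      |Rad^[k] (fun ρ => eta n c ρ s) r| ≤
        C0 * ((1 - s) ^ ((n:ℝ)/2 - 2) * ((1 - r ^ 2) + (1 - s)) ^ (-(n:ℝ)/2)) := by
    intro s hs
    have hr' : r ∈ Set.Ioo (-1:ℝ) 1 := ⟨by linarith, hr1⟩
    rw [Stmt8Aux.rad_iter n c k hs r hr', abs_mul]
    have hSnn : 0 ≤ Stmt8Aux.Ssc n s := by
      rw [Stmt8Aux.Ssc]
      have h1 : (0:ℝ) ≤ 1 - s := by linarith [hs.2]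
      have h2 : (0:ℝ) ≤ s := hs.1.le
      positivity
    have hSle : Stmt8Aux.Ssc n s ≤ (1 - s) ^ ((n:ℝ)/2 - 2) := by
      rw [Stmt8Aux.Ssc]
      have h1 : (0:ℝ) ≤ 1 - s := by linarith [hs.2]
      have h3 : s ^ ((n:ℝ)/2 - 1) ≤ 1 :=
        Real.rpow_le_one hs.1.le hs.2.le (by linarith)
      nlinarith [Real.rpow_nonneg h1 ((n:ℝ)/2 - 2), Real.rpow_nonneg hs.1.le ((n:ℝ)/2 - 1)]
    rw [abs_of_nonneg hSnn]
    have hEb := Stmt8Aux.evalL_bound n hn k L (Stmt8Aux.Lk_inv n c k) hr0 hr1 hs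
    have hvnn : (0:ℝ) ≤ ((1 - r ^ 2) + (1 - s)) ^ (-(n:ℝ)/2) :=
      Real.rpow_nonneg (by nlinarith [hs.2]) _
    have hrknn : (0:ℝ) ≤ (1 - r) ^ ((1:ℝ) - k) := Real.rpow_nonneg h1r.le _
    calc Stmt8Aux.Ssc n s * |Stmt8Aux.evalL n L r s|
        ≤ Stmt8Aux.Ssc n s * (Q * (K * ((1 - r) ^ ((1:ℝ) - k) *
            ((1 - r ^ 2) + (1 - s)) ^ (-(n:ℝ)/2)))) := by
          apply mul_le_mul_of_nonneg_left _ hSnn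
          exact hEb
      _ ≤ (1 - s) ^ ((n:ℝ)/2 - 2) * (Q * (K * ((1 - r) ^ ((1:ℝ) - k) *
            ((1 - r ^ 2) + (1 - s)) ^ (-(n:ℝ)/2)))) := by
          apply mul_le_mul_of_nonneg_right hSle
          positivity
      _ = C0 * ((1 - s) ^ ((n:ℝ)/2 - 2) * ((1 - r ^ 2) + (1 - s)) ^ (-(n:ℝ)/2)) := by
          rw [hC0]; ring
  -- integrate
  have hint : MeasureTheory.IntegrableOn
      (fun s : ℝ => C0 * ((1 - s) ^ ((n:ℝ)/2 - 2) * ((1 - r ^ 2) + (1 - s)) ^ (-(n:ℝ)/2)))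
      (Set.Ioo (0:ℝ) 1) := by
    have := (Stmt8Aux.master_integrable n hn hδ).const_mul C0
    exact this
  have hmono : (∫ s in Set.Ioo (0 : ℝ) 1, |Rad^[k] (fun ρ => eta n c ρ s) r|) ≤
      ∫ s in Set.Ioo (0:ℝ) 1,
        C0 * ((1 - s) ^ ((n:ℝ)/2 - 2) * ((1 - r ^ 2) + (1 - s)) ^ (-(n:ℝ)/2)) := by
    apply MeasureTheory.integral_mono_of_nonneg
    · exact Filter.Eventually.of_forall fun s => abs_nonneg _
    · exact hint
    · exact (MeasureTheory.ae_restrict_iff' measurableSet_Ioo).mpr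
        (Filter.Eventually.of_forall key)
  have hval : (∫ s in Set.Ioo (0:ℝ) 1,
      C0 * ((1 - s) ^ ((n:ℝ)/2 - 2) * ((1 - r ^ 2) + (1 - s)) ^ (-(n:ℝ)/2))) ≤
      C0 * (2 / (1 - r ^ 2)) := by
    rw [MeasureTheory.integral_const_mul]
    exact mul_le_mul_of_nonneg_left (Stmt8Aux.master_integral n hn hδ) hC00
  have hfinal : C0 * (2 / (1 - r ^ 2)) ≤ 2 * (Q * K) / (1 - r) ^ k := by
    have h1 : C0 * (2 / (1 - r ^ 2)) ≤ C0 * (2 / (1 - r)) := by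
      apply mul_le_mul_of_nonneg_left _ hC00
      apply div_le_div_of_nonneg_left (by norm_num) h1r hδr
    have h2 : C0 * (2 / (1 - r)) = 2 * (Q * K) / (1 - r) ^ k := by
      rw [hC0]
      rw [show ((1:ℝ) - (k:ℝ)) = 1 + (-(k:ℝ)) by ring, Real.rpow_add h1r, Real.rpow_one,
        Real.rpow_neg h1r.le, Real.rpow_natCast]
      field_simp
    linarith
  calc (∫ s in Set.Ioo (0 : ℝ) 1, |Rad^[k] (fun ρ => eta n c ρ s) r|)
      ≤ C0 * (2 / (1 - r ^ 2)) := le_trans hmono hval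
    _ ≤ 2 * (Q * K) / (1 - r) ^ k := hfinal
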